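/- Let k be a positive integer with k ≡ 0 (mod 4), and let s ∈ ℂ satisfy: cos(πs/2) ≠ 0; s ≠ −n and s ≠ k + n for every natural number n; s ≠ 1; s ≠ k − 1; ζ(s) ≠ 0; and ζ(k−s) ≠ 0. Then (deriv Λ_k)(s) = Λ_k(s) · ( −(π/2)·tan(πs/2) + ψ(s) − ψ(k−s) + ζ'(s)/ζ(s) − ζ'(k−s)/ζ(k−s) ), where ψ(w) := Γ'(w)/Γ(w) is the logarithmic derivative of the complex Gamma function. -/

import Mathlib

open Complex

/-- The completed `L`-function of the weight-`k` Eisenstein series `E_k`: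
`Λ_k(s) = (2π)^(−s) · Γ(s) · ζ(s) · ζ(s−k+1)`. -/
noncomputable def completedEisensteinL (k : ℕ) (s : ℂ) : ℂ :=
  (2 * Real.pi : ℂ) ^ (-s) * Complex.Gamma s * riemannZeta s * riemannZeta (s - k + 1)

theorem aux_closed (k : ℕ) :
    IsClosed ({((k : ℂ) - 1)} ∪ Set.range (fun n : ℕ => (k : ℂ) + n)) := by
  refine (isClosed_singleton).union ?_
  apply Metric.isClosed_of_pairwise_le_dist zero_lt_one
  rintro x ⟨m, rfl⟩ y ⟨n, rfl⟩ hxy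
  have hmn : m ≠ n := fun h => hxy (by rw [h])
  have h0 : dist ((k : ℂ) + m) ((k : ℂ) + n) = dist (m : ℂ) n := dist_add_left _ _ _
  have h1 : dist (m : ℂ) (n : ℂ) = |(m : ℝ) - n| := by
    rw [Complex.dist_eq, show ((m : ℂ) - n) = (((m : ℝ) - n : ℝ) : ℂ) by push_cast; ring,
      Complex.norm_real, Real.norm_eq_abs]
  have hne : ((m : ℤ) - (n : ℤ)) ≠ 0 := by
    intro h; exact hmn (by omega)
  have h2 : (1 : ℤ) ≤ |(m : ℤ) - (n : ℤ)| := Int.one_le_abs hne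
  rw [h0, h1]
  calc (1:ℝ) ≤ |(((m : ℤ) - (n : ℤ) : ℤ) : ℝ)| := by exact_mod_cast h2
    _ = |(m : ℝ) - n| := by push_cast; ring_nf

theorem aux_alg (K A B C S D E A' B' D' E' p : ℂ) (hA : A ≠ 0) (hB : B ≠ 0)
    (hC : C ≠ 0) (hD : D ≠ 0) (hE : E ≠ 0) :
    2 * K * ((((A' * B + A * -B') * C + A * B * (-S * (p / 2))) * D + A * B * C * D') * E +
        A * B * C * D * -E') =
      2 * K * (A * B * C * D * E) *
        (-(p / 2) * (S / C) + A' / A - B' / B + D' / D - E' / E) := by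
  have hAe : A * A⁻¹ = 1 := mul_inv_cancel₀ hA
  have hBe : B * B⁻¹ = 1 := mul_inv_cancel₀ hB
  have hCe : C * C⁻¹ = 1 := mul_inv_cancel₀ hC
  have hDe : D * D⁻¹ = 1 := mul_inv_cancel₀ hD
  have hEe : E * E⁻¹ = 1 := mul_inv_cancel₀ hE
  simp only [div_eq_mul_inv]
  linear_combination (-(2:ℂ) * K * A' * B * C * D * E) * hAe +
    (2 * K * A * B' * C * D * E) * hBe + (K * p * S * A * B * D * E) * hCe +
    (-(2:ℂ) * K * A * B * C * D' * E) * hDe + (2 * K * A * B * C * D * E') * hEe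

theorem deriv_completedEisensteinL_eq_logDeriv_sum
    (k : ℕ) (hk4 : k % 4 = 0) (s : ℂ)
    (hcos : Complex.cos (Real.pi * s / 2) ≠ 0)
    (hpole₁ : ∀ n : ℕ, s ≠ -(n : ℂ))
    (hpole₂ : ∀ n : ℕ, s ≠ (k : ℂ) + (n : ℂ))
    (hone : s ≠ 1) (hkone : s ≠ (k : ℂ) - 1)
    (hzeta₁ : riemannZeta s ≠ 0) (hzeta₂ : riemannZeta ((k : ℂ) - s) ≠ 0) :
    deriv (completedEisensteinL k) s =
      completedEisensteinL k s *
        (-((Real.pi : ℂ) / 2) * Complex.tan (Real.pi * s / 2) +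
          deriv Complex.Gamma s / Complex.Gamma s -
          deriv Complex.Gamma ((k : ℂ) - s) / Complex.Gamma ((k : ℂ) - s) +
          deriv riemannZeta s / riemannZeta s -
          deriv riemannZeta ((k : ℂ) - s) / riemannZeta ((k : ℂ) - s)) := by
  obtain ⟨m, hm⟩ : ∃ m, k = 4 * m := ⟨k / 4, (Nat.div_mul_cancel (Nat.dvd_of_mod_eq_zero hk4)).symm ▸ by omega⟩
  set π : ℝ := Real.pi
  -- basic nonvanishing
  have hΓs : Complex.Gamma s ≠ 0 := Complex.Gamma_ne_zero hpole₁
  have hks : ∀ n : ℕ, (k : ℂ) - s ≠ -(n : ℂ) := by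
    intro n h
    exact hpole₂ n (by linear_combination -h)
  have hΓks : Complex.Gamma ((k : ℂ) - s) ≠ 0 := Complex.Gamma_ne_zero hks
  have hks1 : (k : ℂ) - s ≠ 1 := fun h => hkone (by linear_combination -h)
  -- the alternate expression for Λ_k near s
  set G : ℂ → ℂ := fun z => 2 * (2 * π : ℂ) ^ (-(k : ℂ)) *
      (Complex.Gamma z * Complex.Gamma ((k : ℂ) - z) * Complex.cos (π * z / 2) *
        riemannZeta z * riemannZeta ((k : ℂ) - z)) with hG
  have h2pi : (2 * π : ℂ) ≠ 0 := by
    simp [π, Real.pi_ne_zero]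
  -- trig identities from k ≡ 0 [MOD 4]
  have hcosk : ∀ z : ℂ, Complex.cos (π * ((k : ℂ) - z) / 2) = Complex.cos (π * z / 2) := by
    intro z
    have : π * ((k : ℂ) - z) / 2 = (m : ℂ) * (2 * π) - π * z / 2 := by
      rw [hm]; push_cast; ring
    rw [this, Complex.cos_nat_mul_two_pi_sub]
  have hsink : Complex.sin (π * ((k : ℂ) - s) / 2) = -Complex.sin (π * s / 2) := by
    have : π * ((k : ℂ) - s) / 2 = (m : ℂ) * (2 * π) - π * s / 2 := by
      rw [hm]; push_cast; ring
    rw [this, Complex.sin_nat_mul_two_pi_sub]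
  have heq : completedEisensteinL k =ᶠ[nhds s] G := by
    have hopen : IsOpen ({((k : ℂ) - 1)} ∪ Set.range (fun n : ℕ => (k : ℂ) + n))ᶜ :=
      (aux_closed k).isOpen_compl
    have hsmem : s ∈ ({((k : ℂ) - 1)} ∪ Set.range (fun n : ℕ => (k : ℂ) + n))ᶜ := by
      simp only [Set.mem_compl_iff, Set.mem_union, Set.mem_singleton_iff, Set.mem_range, not_or]
      exact ⟨hkone, fun ⟨n, hn⟩ => hpole₂ n hn.symm⟩
    filter_upwards [hopen.eventually_mem hsmem] with z hz
    simp only [Set.mem_compl_iff, Set.mem_union, Set.mem_singleton_iff, Set.mem_range, not_or] at hz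
    obtain ⟨hz1, hz2⟩ := hz
    have hzk : ∀ n : ℕ, (k : ℂ) - z ≠ -(n : ℂ) := by
      intro n h
      exact hz2 ⟨n, by linear_combination h⟩
    have hzk1 : (k : ℂ) - z ≠ 1 := fun h => hz1 (by linear_combination -h)
    have hfe : riemannZeta (z - (k : ℂ) + 1) =
        2 * (2 * π : ℂ) ^ (-((k : ℂ) - z)) * Complex.Gamma ((k : ℂ) - z) *
          Complex.cos (π * ((k : ℂ) - z) / 2) * riemannZeta ((k : ℂ) - z) := by
      rw [show z - (k : ℂ) + 1 = 1 - ((k : ℂ) - z) by ring]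
      exact riemannZeta_one_sub hzk hzk1
    have hpow : (2 * π : ℂ) ^ (-z) * (2 * π : ℂ) ^ (-((k : ℂ) - z)) =
        (2 * π : ℂ) ^ (-(k : ℂ)) := by
      rw [← Complex.cpow_add _ _ h2pi]; ring_nf
    simp only [completedEisensteinL, hG, hfe, hcosk z]
    rw [← hpow]; ring
  rw [heq.deriv_eq, heq.self_of_nhds]
  -- differentiate G
  have h1 : HasDerivAt Complex.Gamma (deriv Complex.Gamma s) s :=
    (Complex.differentiableAt_Gamma s hpole₁).hasDerivAt
  have hlin : HasDerivAt (fun z : ℂ => (k : ℂ) - z) (-1) s := by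
    simpa using (hasDerivAt_id s).const_sub (k : ℂ)
  have h2 : HasDerivAt (fun z : ℂ => Complex.Gamma ((k : ℂ) - z))
      (-deriv Complex.Gamma ((k : ℂ) - s)) s := by
    exact (((Complex.differentiableAt_Gamma _ hks).hasDerivAt).comp s hlin).congr_deriv (by ring)
  have hlin2 : HasDerivAt (fun z : ℂ => (π : ℂ) * z / 2) ((π : ℂ) / 2) s := by
    simpa using ((hasDerivAt_id s).const_mul (π : ℂ)).div_const 2
  have h3 : HasDerivAt (fun z : ℂ => Complex.cos (π * z / 2))
      (-Complex.sin (π * s / 2) * ((π : ℂ) / 2)) s :=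
    (Complex.hasDerivAt_cos _).comp s hlin2
  have h4 : HasDerivAt riemannZeta (deriv riemannZeta s) s :=
    (differentiableAt_riemannZeta hone).hasDerivAt
  have h5 : HasDerivAt (fun z : ℂ => riemannZeta ((k : ℂ) - z))
      (-deriv riemannZeta ((k : ℂ) - s)) s := by
    exact (((differentiableAt_riemannZeta hks1).hasDerivAt).comp s hlin).congr_deriv (by ring)
  have H := ((((h1.mul h2).mul h3).mul h4).mul h5).const_mul (2 * (2 * π : ℂ) ^ (-(k : ℂ)))
  have hGd : deriv G s = 2 * (2 * π : ℂ) ^ (-(k : ℂ)) *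
      ((((deriv Complex.Gamma s * Complex.Gamma ((k : ℂ) - s) +
          Complex.Gamma s * -deriv Complex.Gamma ((k : ℂ) - s)) * Complex.cos (π * s / 2) +
          Complex.Gamma s * Complex.Gamma ((k : ℂ) - s) *
            (-Complex.sin (π * s / 2) * ((π : ℂ) / 2))) * riemannZeta s +
          Complex.Gamma s * Complex.Gamma ((k : ℂ) - s) * Complex.cos (π * s / 2) *
            deriv riemannZeta s) * riemannZeta ((k : ℂ) - s) +
          Complex.Gamma s * Complex.Gamma ((k : ℂ) - s) * Complex.cos (π * s / 2) *
            riemannZeta s * -deriv riemannZeta ((k : ℂ) - s)) := H.deriv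
  rw [hGd, Complex.tan_eq_sin_div_cos]
  simp only [hG]
  exact aux_alg ((2 * (π : ℂ)) ^ (-(k : ℂ))) (Complex.Gamma s) (Complex.Gamma ((k : ℂ) - s))
    (Complex.cos ((π : ℂ) * s / 2)) (Complex.sin ((π : ℂ) * s / 2)) (riemannZeta s)
    (riemannZeta ((k : ℂ) - s)) (deriv Complex.Gamma s) (deriv Complex.Gamma ((k : ℂ) - s))
    (deriv riemannZeta s) (deriv riemannZeta ((k : ℂ) - s)) ((π : ℝ) : ℂ)
    hΓs hΓks hcos hzeta₁ hzeta₂
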